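/- Let D > 0, t > 0, v ∈ ℝ, and let z_b^TX < z_b^S and z_a^RX < z_b^RX be real numbers. Define b₀ = z_b^RX − z_b^TX − v·t, b₁ = z_b^RX − z_b^S − v·t, b₂ = z_a^RX − z_b^S − v·t, b₃ = z_a^RX − z_b^TX − v·t. Then (1/(z_b^S − z_b^TX))·∫_{z_b^TX}^{z_b^S} ∫_{z_a^RX}^{z_b^RX} (1/√(4πDt))·exp(−(z_r − z_m − v·t)²/(4Dt)) dz_r dz_m = (1/(2·(z_b^S − z_b^TX)))·Σ_{i=0}^{3} (−1)^i·[b_i·erf(b_i/√(4Dt)) + √(4Dt/π)·exp(−b_i²/(4Dt))]. (This is the channel impulse response h₁(t), Eq. (25) of the paper, for a molecule uniformly distributed outside the TX region at time 0.) -/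

import Mathlib

/-- The Gaussian error function `erf(x) = (2/√π)·∫₀ˣ exp(−u²) du`. -/
noncomputable def erf (x : ℝ) : ℝ :=
  (2 / Real.sqrt Real.pi) * ∫ u in (0:ℝ)..x, Real.exp (-u ^ 2)

lemma erf_hasDerivAt (x : ℝ) :
    HasDerivAt erf ((2 / Real.sqrt Real.pi) * Real.exp (-x ^ 2)) x := by
  have hc : Continuous fun u : ℝ => Real.exp (-u ^ 2) := by continuity
  have h := intervalIntegral.integral_hasDerivAt_right
    (hc.intervalIntegrable 0 x)
    hc.aestronglyMeasurable.stronglyMeasurableAtFilter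
    hc.continuousAt
  exact h.const_mul _

lemma erf_continuous : Continuous erf := by
  have : Differentiable ℝ erf := fun x => (erf_hasDerivAt x).differentiableAt
  exact this.continuous

lemma G_hasDerivAt (X : ℝ) :
    HasDerivAt (fun X => X * erf X + Real.exp (-X ^ 2) / Real.sqrt Real.pi) (erf X) X := by
  have h1 : HasDerivAt (fun X => X * erf X)
      (1 * erf X + X * ((2 / Real.sqrt Real.pi) * Real.exp (-X ^ 2))) X :=
    (hasDerivAt_id X).mul (erf_hasDerivAt X)
  have h2 : HasDerivAt (fun X : ℝ => Real.exp (-X ^ 2))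
      (Real.exp (-X ^ 2) * (-(2 * X))) X := by
    have := ((hasDerivAt_pow 2 X).neg).exp
    simpa using this
  have h := h1.add (h2.div_const (Real.sqrt Real.pi))
  have hpi : Real.sqrt Real.pi ≠ 0 := by positivity
  refine h.congr_deriv ?_
  field_simp
  ring

lemma inner_int (s : ℝ) (hs : 0 < s) (μ a b : ℝ) :
    ∫ zr in a..b, (1 / (s * Real.sqrt Real.pi)) * Real.exp (-((zr - μ) / s) ^ 2)
      = (1 / 2) * (erf ((b - μ) / s) - erf ((a - μ) / s)) := by
  have hc : Continuous fun u : ℝ => Real.exp (-u ^ 2) := by continuity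
  have hpi : (0:ℝ) < Real.sqrt Real.pi := Real.sqrt_pos.2 Real.pi_pos
  rw [intervalIntegral.integral_const_mul]
  have h1 : (∫ zr in a..b, Real.exp (-((zr - μ) / s) ^ 2))
      = ∫ x in (a - μ)..(b - μ), Real.exp (-(x / s) ^ 2) :=
    intervalIntegral.integral_comp_sub_right (fun x => Real.exp (-(x / s) ^ 2)) μ
  have h2 : (∫ x in (a - μ)..(b - μ), Real.exp (-(x / s) ^ 2))
      = s • ∫ u in ((a - μ)/s)..((b - μ)/s), Real.exp (-u ^ 2) :=
    intervalIntegral.integral_comp_div (f := fun u => Real.exp (-u ^ 2)) hs.ne'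
  have h3 : erf ((b - μ) / s) - erf ((a - μ) / s)
      = (2 / Real.sqrt Real.pi) * ∫ u in ((a - μ)/s)..((b - μ)/s), Real.exp (-u ^ 2) := by
    unfold erf
    rw [← mul_sub, intervalIntegral.integral_interval_sub_left
      (hc.intervalIntegrable _ _) (hc.intervalIntegrable _ _)]
  rw [h1, h2, h3, smul_eq_mul]
  field_simp

lemma F_hasDerivAt (s c : ℝ) (hs : s ≠ 0) (z : ℝ) :
    HasDerivAt (fun z => s * ((c - z) / s * erf ((c - z) / s)
        + Real.exp (-((c - z) / s) ^ 2) / Real.sqrt Real.pi))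
      (-erf ((c - z) / s)) z := by
  have inner : HasDerivAt (fun z : ℝ => (c - z) / s) (-1 / s) z := by
    simpa using ((hasDerivAt_id z).const_sub c).div_const s
  have h := (HasDerivAt.comp z (G_hasDerivAt ((c - z) / s)) inner).const_mul s
  refine h.congr_deriv ?_
  field_simp


set_option maxHeartbeats 1000000 in
/-- Eq. (25): the channel impulse response `h₁(t)` for a molecule uniformly
distributed outside the TX region, i.e. in `[zbTX, zbS]`, at time 0, observed in
the RX region `[zaRX, zbRX]` at time `t`. -/
theorem stmt_6 (D t v zbTX zbS zaRX zbRX : ℝ) (hD : 0 < D) (ht : 0 < t)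
    (hS : zbTX < zbS) (hRX : zaRX < zbRX)
    (b : Fin 4 → ℝ)
    (hb : b = ![zbRX - zbTX - v * t, zbRX - zbS - v * t,
                zaRX - zbS - v * t, zaRX - zbTX - v * t]) :
    (1 / (zbS - zbTX)) * ∫ zm in zbTX..zbS, ∫ zr in zaRX..zbRX,
        (1 / Real.sqrt (4 * Real.pi * D * t)) *
          Real.exp (-(zr - zm - v * t) ^ 2 / (4 * D * t)) =
      (1 / (2 * (zbS - zbTX))) * ∑ i : Fin 4, (-1 : ℝ) ^ (i : ℕ) *
        (b i * erf (b i / Real.sqrt (4 * D * t)) +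
          Real.sqrt (4 * D * t / Real.pi) * Real.exp (-(b i) ^ 2 / (4 * D * t))) := by
  have h4Dt : (0:ℝ) < 4 * D * t := by positivity
  set s := Real.sqrt (4 * D * t) with hsdef
  have hs : 0 < s := Real.sqrt_pos.2 h4Dt
  have hs2 : s ^ 2 = 4 * D * t := Real.sq_sqrt h4Dt.le
  have hpi : (0:ℝ) < Real.sqrt Real.pi := Real.sqrt_pos.2 Real.pi_pos
  have hsq : Real.sqrt (4 * Real.pi * D * t) = s * Real.sqrt Real.pi := by
    rw [hsdef, ← Real.sqrt_mul h4Dt.le Real.pi]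
    congr 1; ring
  have hexp : ∀ x : ℝ, Real.exp (-x ^ 2 / (4 * D * t)) = Real.exp (-(x / s) ^ 2) := by
    intro x; congr 1; rw [div_pow, hs2]; ring
  have hinner : ∀ zm : ℝ,
      (∫ zr in zaRX..zbRX, (1 / Real.sqrt (4 * Real.pi * D * t)) *
          Real.exp (-(zr - zm - v * t) ^ 2 / (4 * D * t)))
        = (1/2) * (erf ((zbRX - v * t - zm) / s) - erf ((zaRX - v * t - zm) / s)) := by
    intro zm
    rw [show zbRX - v * t - zm = zbRX - (zm + v * t) by ring,
        show zaRX - v * t - zm = zaRX - (zm + v * t) by ring,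
        ← inner_int s hs (zm + v * t) zaRX zbRX]
    apply intervalIntegral.integral_congr
    intro zr _
    simp only
    rw [hsq, hexp (zr - zm - v * t), show zr - zm - v * t = zr - (zm + v * t) by ring]
  have houter : (∫ zm in zbTX..zbS, ∫ zr in zaRX..zbRX,
        (1 / Real.sqrt (4 * Real.pi * D * t)) *
          Real.exp (-(zr - zm - v * t) ^ 2 / (4 * D * t)))
      = ∫ zm in zbTX..zbS,
          (1/2) * (erf ((zbRX - v * t - zm) / s) - erf ((zaRX - v * t - zm) / s)) :=
    intervalIntegral.integral_congr fun zm _ => hinner zm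
  have hΦ : ∀ z ∈ Set.uIcc zbTX zbS, HasDerivAt (fun z =>
      (1/2) * (-(s * ((zbRX - v * t - z) / s * erf ((zbRX - v * t - z) / s)
            + Real.exp (-((zbRX - v * t - z) / s) ^ 2) / Real.sqrt Real.pi))
        + s * ((zaRX - v * t - z) / s * erf ((zaRX - v * t - z) / s)
            + Real.exp (-((zaRX - v * t - z) / s) ^ 2) / Real.sqrt Real.pi)))
      ((1/2) * (erf ((zbRX - v * t - z) / s) - erf ((zaRX - v * t - z) / s))) z := by
    intro z _
    have h0 := (F_hasDerivAt s (zbRX - v * t) hs.ne' z).neg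
    have h1 := F_hasDerivAt s (zaRX - v * t) hs.ne' z
    have h2 := (h0.add h1).const_mul (1/2 : ℝ)
    refine h2.congr_deriv ?_
    ring
  have hcont : Continuous fun z : ℝ =>
      (1/2) * (erf ((zbRX - v * t - z) / s) - erf ((zaRX - v * t - z) / s)) :=
    continuous_const.mul ((erf_continuous.comp ((continuous_const.sub continuous_id).div_const s)).sub
      (erf_continuous.comp ((continuous_const.sub continuous_id).div_const s)))
  have hFTC := intervalIntegral.integral_eq_sub_of_hasDerivAt hΦ
    (hcont.intervalIntegrable zbTX zbS)
  rw [houter, hFTC]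
  subst hb
  have hdiv : Real.sqrt (4 * D * t / Real.pi) = s / Real.sqrt Real.pi := by
    rw [hsdef, Real.sqrt_div h4Dt.le]
  simp only [Fin.sum_univ_four, Matrix.cons_val_zero, Matrix.cons_val_one, Matrix.head_cons,
    Matrix.cons_val_two, Matrix.tail_cons, Matrix.cons_val_three, hdiv, hexp]
  have e1 : zbRX - v * t - zbS = zbRX - zbS - v * t := by ring
  have e2 : zbRX - v * t - zbTX = zbRX - zbTX - v * t := by ring
  have e3 : zaRX - v * t - zbS = zaRX - zbS - v * t := by ring
  have e4 : zaRX - v * t - zbTX = zaRX - zbTX - v * t := by ring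
  rw [e1, e2, e3, e4]
  simp only [show ((0:Fin 4):ℕ) = 0 from rfl, show ((1:Fin 4):ℕ) = 1 from rfl,
    show ((2:Fin 4):ℕ) = 2 from rfl, show ((3:Fin 4):ℕ) = 3 from rfl]
  norm_num
  have hΔ : zbS - zbTX ≠ 0 := sub_ne_zero.2 hS.ne'
  field_simp [hs.ne', hpi.ne', hΔ]
  ring
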